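/- Under the abstract kernel ridge regression setup, for every λ > 0 one has ‖(L + λI)^{1/2}(f⋄_λ − f_λ)‖_H ≤ Q_λ^2 P_λ. -/

import Mathlib

open ContinuousLinearMap

/-- `S` is the positive square root of the positive operator `T`. -/
def IsSqrtOf {E : Type*} [NormedAddCommGroup E] [InnerProductSpace ℝ E]
    [CompleteSpace E] (S T : E →L[ℝ] E) : Prop :=
  S.IsPositive ∧ S ∘L S = T

/-- `S` is the inverse `T⁻¹` of the operator `T`. -/
def IsInvOf {E : Type*} [NormedAddCommGroup E] [InnerProductSpace ℝ E]
    [CompleteSpace E] (S T : E →L[ℝ] E) : Prop :=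
  S ∘L T = 1 ∧ T ∘L S = 1

/-- `S` is the inverse square root `T^{-1/2}` of the positive invertible operator `T`,
i.e. `S` is positive and `S ∘ S = T⁻¹`. -/
def IsInvSqrtOf {E : Type*} [NormedAddCommGroup E] [InnerProductSpace ℝ E]
    [CompleteSpace E] (S T : E →L[ℝ] E) : Prop :=
  S.IsPositive ∧ IsInvOf (S ∘L S) T

/-- `p` is the family of real powers `t ↦ A ^ t` (for `t ≥ 0`) of the positive operator `A`,
given by the continuous functional calculus; it is characterized by the semigroup property
together with positivity, continuity, `p 0 = 1` and `p 1 = A`. -/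
def IsPowerFamilyOf {E : Type*} [NormedAddCommGroup E] [InnerProductSpace ℝ E]
    [CompleteSpace E] (A : E →L[ℝ] E) (p : ℝ → E →L[ℝ] E) : Prop :=
  p 0 = 1 ∧ p 1 = A ∧ (∀ s t : ℝ, 0 ≤ s → 0 ≤ t → p (s + t) = p s ∘L p t) ∧
    (∀ t : ℝ, 0 ≤ t → (p t).IsPositive) ∧ ContinuousOn p (Set.Ici (0 : ℝ))

/-- symmetric property of self-adjoint continuous linear maps (real case). -/
lemma sym_of_sa {E : Type*} [NormedAddCommGroup E] [InnerProductSpace ℝ E]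
    [CompleteSpace E] {T : E →L[ℝ] E} (hT : IsSelfAdjoint T) (x y : E) :
    inner ℝ (T x) y = (inner ℝ x (T y) : ℝ) := by
  conv_lhs => rw [← ContinuousLinearMap.isSelfAdjoint_iff'.mp hT]
  exact ContinuousLinearMap.adjoint_inner_left T y x

/-- In the abstract kernel ridge regression setup, for every `lam > 0`,
`‖(L + lam I)^{1/2}(f⋄_lam − f_lam)‖ ≤ Q_lam^2 P_lam`. -/
theorem stmt4 {H : Type*} [NormedAddCommGroup H] [InnerProductSpace ℝ H] [CompleteSpace H]
    [TopologicalSpace.SeparableSpace H]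
    (A L : H →L[ℝ] H) (hA : A.IsPositive) (hL : L.IsPositive)
    (r : ℝ) (hr : 1 / 2 ≤ r) (hr1 : r ≤ 1)
    (pL : ℝ → H →L[ℝ] H) (hpL : IsPowerFamilyOf L pL)
    (h frho : H) (hfrho : frho = pL r h)
    (y' : H) (lam : ℝ) (hlam : 0 < lam)
    (Rinv : H →L[ℝ] H) (hRinv : IsInvOf Rinv (A + lam • (1 : H →L[ℝ] H)))
    (SL : H →L[ℝ] H) (hSL : IsSqrtOf SL (L + lam • (1 : H →L[ℝ] H)))
    (SAinv : H →L[ℝ] H) (hSAinv : IsInvSqrtOf SAinv (A + lam • (1 : H →L[ℝ] H)))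
    (SLinv : H →L[ℝ] H) (hSLinv : IsInvSqrtOf SLinv (L + lam • (1 : H →L[ℝ] H))) :
    ‖SL (Rinv (A frho) - Rinv y')‖ ≤ ‖SL ∘L SAinv‖ ^ 2 * ‖SLinv (y' - A frho)‖ := by
  set TA : H →L[ℝ] H := A + lam • (1 : H →L[ℝ] H) with hTA
  set TL : H →L[ℝ] H := L + lam • (1 : H →L[ℝ] H) with hTL
  obtain ⟨e1, e2⟩ := hRinv
  obtain ⟨hSLpos, e3⟩ := hSL
  obtain ⟨hSApos, e4, e5⟩ := hSAinv
  obtain ⟨hSLipos, e6, e7⟩ := hSLinv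
  -- translate compositions to multiplication
  have e1' : Rinv * TA = 1 := e1
  have e3' : SL * SL = TL := e3
  have e5' : TA * (SAinv * SAinv) = 1 := e5
  have e6' : SLinv * SLinv * TL = 1 := e6
  have e7' : TL * (SLinv * SLinv) = 1 := e7
  -- Rinv = SAinv * SAinv
  have hR : Rinv = SAinv * SAinv := by
    calc Rinv = Rinv * (TA * (SAinv * SAinv)) := by rw [e5', mul_one]
    _ = (Rinv * TA) * (SAinv * SAinv) := by rw [mul_assoc]
    _ = SAinv * SAinv := by rw [e1', one_mul]
  -- key factorization
  have key : SL * Rinv = (SL * SAinv) * ((SAinv * SL) * ((SL * SLinv) * SLinv)) := by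
    have : (SL * SAinv) * ((SAinv * SL) * ((SL * SLinv) * SLinv))
        = (SL * (SAinv * SAinv)) * ((SL * SL) * (SLinv * SLinv)) := by
      noncomm_ring
    rw [this, e3', e7', mul_one, ← hR]
  -- the operator SL * SLinv is an isometry
  have hcomm : SLinv * TL = TL * SLinv := by
    calc SLinv * TL = (TL * (SLinv * SLinv)) * (SLinv * TL) := by rw [e7', one_mul]
    _ = (TL * SLinv) * ((SLinv * SLinv) * TL) := by noncomm_ring
    _ = TL * SLinv := by rw [e6', mul_one]
  have hVV : SLinv * (SL * (SL * SLinv)) = 1 := by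
    have : SLinv * (SL * (SL * SLinv)) = SLinv * (TL * SLinv) := by
      rw [← e3']; noncomm_ring
    rw [this, ← hcomm, ← mul_assoc, e6']
  have hiso : ∀ z : H, ‖(SL ∘L SLinv) z‖ ≤ ‖z‖ := by
    intro z
    have h1 : inner ℝ ((SL ∘L SLinv) z) ((SL ∘L SLinv) z) = (inner ℝ z z : ℝ) := by
      have s1 := sym_of_sa hSLpos.isSelfAdjoint (SLinv z) (SL (SLinv z))
      have s2 := sym_of_sa hSLipos.isSelfAdjoint z (SL (SL (SLinv z)))
      calc inner ℝ ((SL ∘L SLinv) z) ((SL ∘L SLinv) z)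
          = (inner ℝ (SL (SLinv z)) (SL (SLinv z)) : ℝ) := rfl
        _ = inner ℝ (SLinv z) (SL (SL (SLinv z))) := s1
        _ = inner ℝ z (SLinv (SL (SL (SLinv z)))) := s2
        _ = inner ℝ z ((SLinv * (SL * (SL * SLinv))) z) := rfl
        _ = inner ℝ z z := by rw [hVV]; rfl
    have h2 : ‖(SL ∘L SLinv) z‖ ^ 2 = ‖z‖ ^ 2 := by
      rw [← real_inner_self_eq_norm_sq, ← real_inner_self_eq_norm_sq, h1]
    nlinarith [norm_nonneg ((SL ∘L SLinv) z), norm_nonneg z]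
  -- norms of adjoints agree
  have hadj : ‖SAinv ∘L SL‖ = ‖SL ∘L SAinv‖ := by
    have : SAinv ∘L SL = ContinuousLinearMap.adjoint (SL ∘L SAinv) := by
      rw [ContinuousLinearMap.adjoint_comp,
        ContinuousLinearMap.isSelfAdjoint_iff'.mp hSLpos.isSelfAdjoint,
        ContinuousLinearMap.isSelfAdjoint_iff'.mp hSApos.isSelfAdjoint]
    rw [this, LinearIsometryEquiv.norm_map]
  -- put everything together
  set w : H := y' - A frho with hw
  have hpt : SL (Rinv (A frho) - Rinv y') = (SL * Rinv) (-w) := by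
    simp [hw, map_sub]
  rw [hpt, map_neg, norm_neg, key]
  have expand : ((SL * SAinv) * ((SAinv * SL) * ((SL * SLinv) * SLinv))) w
      = (SL ∘L SAinv) ((SAinv ∘L SL) ((SL ∘L SLinv) (SLinv w))) := rfl
  rw [expand]
  calc ‖(SL ∘L SAinv) ((SAinv ∘L SL) ((SL ∘L SLinv) (SLinv w)))‖
      ≤ ‖SL ∘L SAinv‖ * ‖(SAinv ∘L SL) ((SL ∘L SLinv) (SLinv w))‖ := le_opNorm _ _
    _ ≤ ‖SL ∘L SAinv‖ * (‖SAinv ∘L SL‖ * ‖(SL ∘L SLinv) (SLinv w)‖) := by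
        gcongr
        exact le_opNorm _ _
    _ ≤ ‖SL ∘L SAinv‖ * (‖SL ∘L SAinv‖ * ‖SLinv w‖) := by
        rw [hadj]; gcongr
        exact hiso _
    _ = ‖SL ∘L SAinv‖ ^ 2 * ‖SLinv w‖ := by ring
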